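/- Let N be a finitely generated torsion-free nilpotent group and φ, ψ : N → N endomorphisms. Let N = N₁ ≥ N₂ ≥ … ≥ N_c ≥ N_{c+1} = 1 be the adapted lower central series of N, i.e. a chain of subgroups such that for each k: N_k is normal in N and invariant under both φ and ψ; the commutator satisfies [N, N_k] ≤ N_{k+1} (so N_k/N_{k+1} is central in N/N_{k+1}); and each factor G_k = N_k/N_{k+1} is a finitely generated torsion-free abelian group (so G_k ≅ ℤ^{d_k} for some d_k). Let φ_k, ψ_k denote the endomorphisms of G_k induced by φ, ψ. If R(φ,ψ) < ∞ and R(φ_k,ψ_k) < ∞ for all 1 ≤ k ≤ c, then R(φ,ψ) = ∏_{k=1}^{c} R(φ_k,ψ_k). -/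

import Mathlib

namespace ReidProd

open scoped commutatorElement

variable {G : Type*} {H : Type*} [Group G] [Group H]

/-- The (φ,ψ)-twisted conjugacy relation. -/
def RRel (φ ψ : G →* G) : G → G → Prop := fun x y => ∃ g, y = ψ g * x * (φ g)⁻¹

theorem rrel_equivalence (φ ψ : G →* G) : Equivalence (RRel φ ψ) := by
  constructor
  · intro x; exact ⟨1, by simp⟩
  · rintro x y ⟨g, rfl⟩
    refine ⟨g⁻¹, ?_⟩
    simp only [map_inv]
    group
  · rintro x y z ⟨g, rfl⟩ ⟨h, rfl⟩
    refine ⟨h * g, ?_⟩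
    simp only [map_mul]
    group

theorem rrel_quot_eq (φ ψ : G →* G) {x y : G} :
    Quot.mk (RRel φ ψ) x = Quot.mk (RRel φ ψ) y ↔ RRel φ ψ x y := by
  rw [Quot.eq]
  exact (rrel_equivalence φ ψ).eqvGen_iff

/-- Transfer of twisted-conjugacy sets along an equivariant isomorphism. -/
noncomputable def rsetEquiv (e : G ≃* H) (φG ψG : G →* G) (φH ψH : H →* H)
    (hφ : ∀ g, φH (e g) = e (φG g)) (hψ : ∀ g, ψH (e g) = e (ψG g)) :
    Quot (RRel φG ψG) ≃ Quot (RRel φH ψH) where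
  toFun := Quot.map e (by
    rintro x y ⟨g, rfl⟩
    exact ⟨e g, by simp only [map_mul, map_inv, hφ, hψ]⟩)
  invFun := Quot.map e.symm (by
    rintro x y ⟨h, rfl⟩
    refine ⟨e.symm h, ?_⟩
    have h1 : φH h = e (φG (e.symm h)) := by
      have := hφ (e.symm h); rwa [e.apply_symm_apply] at this
    have h2 : ψH h = e (ψG (e.symm h)) := by
      have := hψ (e.symm h); rwa [e.apply_symm_apply] at this
    rw [h1, h2]
    simp only [map_mul, map_inv, MulEquiv.symm_apply_apply])
  left_inv := by
    rintro ⟨x⟩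
    simp only [Quot.map]
    rw [e.symm_apply_apply]
  right_inv := by
    rintro ⟨x⟩
    simp only [Quot.map]
    rw [e.apply_symm_apply]

/-- An endomorphism pair of `ℤ^d` with finitely many twisted conjugacy classes
has trivial coincidence group. -/
theorem inj_of_finite_int (d : ℕ)
    (Φ Ψ : Multiplicative (Fin d → ℤ) →* Multiplicative (Fin d → ℤ))
    (hf : Finite (Quot (RRel Φ Ψ))) :
    ∀ u, Ψ u = Φ u → u = 1 := by
  classical
  intro u hu
  let M := Multiplicative (Fin d → ℤ)
  let D : M →* M := Ψ * Φ⁻¹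
  have hD : ∀ g, D g = Ψ g * (Φ g)⁻¹ := fun g => rfl
  have hcomm : ∀ a b x : M, x⁻¹ * (a * x * b) = a * b := fun a b x => by
    rw [mul_comm a x, mul_assoc x a b, inv_mul_cancel_left]
  -- the quotient group is finite
  have wd : ∀ x y : M, RRel Φ Ψ x y →
      (QuotientGroup.mk x : M ⧸ D.range) = QuotientGroup.mk y := by
    rintro x y ⟨g, rfl⟩
    rw [QuotientGroup.eq]
    exact ⟨g, by rw [hD, hcomm]⟩
  let p : Quot (RRel Φ Ψ) → M ⧸ D.range := Quot.lift QuotientGroup.mk wd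
  have hp : Function.Surjective p := fun q => by
    obtain ⟨x, rfl⟩ := QuotientGroup.mk_surjective q
    exact ⟨Quot.mk _ x, rfl⟩
  have hfinQ : Finite (M ⧸ D.range) := Finite.of_surjective p hp
  set n := Monoid.exponent (M ⧸ D.range) with hn
  have hn0 : n ≠ 0 := Monoid.exponent_ne_zero_of_finite
  have hnpow : ∀ x : M, x ^ n ∈ D.range := by
    intro x
    have h1 : ((x ^ n : M) : M ⧸ D.range) = 1 := by
      rw [QuotientGroup.mk_pow]
      exact Monoid.pow_exponent_eq_one _
    rwa [QuotientGroup.eq_one_iff] at h1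
  -- pass to the additive picture
  let δ : (Fin d → ℤ) →+ (Fin d → ℤ) := MonoidHom.toAdditive D
  have hδ : ∀ x : Fin d → ℤ, δ x = Multiplicative.toAdd (D (Multiplicative.ofAdd x)) :=
    fun x => rfl
  have hδrange : ∀ x : Fin d → ℤ, ∃ v, δ v = n • x := by
    intro x
    obtain ⟨v, hv⟩ := hnpow (Multiplicative.ofAdd x)
    refine ⟨Multiplicative.toAdd v, ?_⟩
    rw [hδ]
    simp only [ofAdd_toAdd]
    rw [hv, toAdd_pow, toAdd_ofAdd]
  let A : Matrix (Fin d) (Fin d) ℤ := Matrix.of fun i j => δ (Pi.single j 1) i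
  have hA : ∀ x, δ x = A.mulVec x := by
    intro x
    have hx : x = ∑ j : Fin d, (x j) • Pi.single j (1 : ℤ) := by
      funext i
      simp [Pi.single_apply, Finset.sum_apply]
    conv_lhs => rw [hx]
    rw [map_sum]
    funext i
    rw [Finset.sum_apply]
    simp only [map_zsmul]
    simp [Matrix.mulVec, dotProduct, A, mul_comm]
  choose v hv using fun i => hδrange (Pi.single i 1)
  let B : Matrix (Fin d) (Fin d) ℤ := Matrix.of fun i j => v j i
  have hAB : A * B = (n : ℤ) • (1 : Matrix (Fin d) (Fin d) ℤ) := by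
    ext i j
    have h1 := congrFun (hv j) i
    rw [hA] at h1
    have h2 : (A * B) i j = A.mulVec (v j) i := by
      simp [Matrix.mul_apply, Matrix.mulVec, dotProduct, B]
    rw [h2, h1]
    simp [Pi.single_apply, Matrix.one_apply]
  have hdet : A.det ≠ 0 := by
    intro h
    have h1 : A.det * B.det = ((n : ℤ))^d := by
      rw [← Matrix.det_mul, hAB, Matrix.det_smul, Matrix.det_one, mul_one, Fintype.card_fin]
    rw [h, zero_mul] at h1
    exact (pow_ne_zero d (by exact_mod_cast hn0)) h1.symm
  have hinj : ∀ x : Fin d → ℤ, δ x = 0 → x = 0 := by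
    intro x hx0
    rw [hA] at hx0
    have h2 : A.det • x = 0 := by
      have h3 := congrArg (fun w => A.adjugate.mulVec w) hx0
      simp only [Matrix.mulVec_mulVec, Matrix.adjugate_mul, Matrix.smul_mulVec,
        Matrix.one_mulVec, Matrix.mulVec_zero] at h3
      exact h3
    funext i
    have := congrFun h2 i
    simp only [Pi.smul_apply, smul_eq_mul, Pi.zero_apply] at this
    rcases mul_eq_zero.1 this with h | h
    · exact absurd h hdet
    · exact h
  -- conclude
  have hDu : D u = 1 := by rw [hD, hu, mul_inv_cancel]
  have : δ (Multiplicative.toAdd u) = 0 := by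
    rw [hδ]
    simp only [ofAdd_toAdd, hDu]
    rfl
  have h0 := hinj _ this
  have : u = Multiplicative.ofAdd 0 := by
    rw [← h0]
    simp
  simpa using this

/-- Transfer the previous lemma along an isomorphism with `ℤ^d`. -/
theorem inj_of_finite (Φ Ψ : H →* H) (d : ℕ) (e : H ≃* Multiplicative (Fin d → ℤ))
    (hf : Finite (Quot (RRel Φ Ψ))) : ∀ u, Ψ u = Φ u → u = 1 := by
  intro u hu
  let Φ' : Multiplicative (Fin d → ℤ) →* Multiplicative (Fin d → ℤ) :=
    (e.toMonoidHom.comp Φ).comp e.symm.toMonoidHom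
  let Ψ' : Multiplicative (Fin d → ℤ) →* Multiplicative (Fin d → ℤ) :=
    (e.toMonoidHom.comp Ψ).comp e.symm.toMonoidHom
  have hφ : ∀ g, Φ' (e g) = e (Φ g) := fun g => by simp [Φ']
  have hψ : ∀ g, Ψ' (e g) = e (Ψ g) := fun g => by simp [Ψ']
  haveI : Finite (Quot (RRel Φ' Ψ')) :=
    Finite.of_equiv _ (rsetEquiv e Φ Ψ Φ' Ψ' hφ hψ)
  have h := inj_of_finite_int d Φ' Ψ' this (e u) (by rw [hφ, hψ, hu])
  have := congrArg e.symm h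
  simpa using this


/-- Counting twisted conjugacy classes along a central extension with trivial
twisted coincidence groups on the quotient. -/
theorem central_step (φ ψ : G →* G) (A : Subgroup G) [nA : A.Normal]
    (hcen : ∀ a ∈ A, ∀ g : G, a * g = g * a)
    (φA ψA : ↥A →* ↥A)
    (hφA : ∀ a : ↥A, (φA a : G) = φ (a : G)) (hψA : ∀ a : ↥A, (ψA a : G) = ψ (a : G))
    (φQ ψQ : G ⧸ A →* G ⧸ A)
    (hφQ : ∀ g : G, φQ (g : G ⧸ A) = ((φ g : G) : G ⧸ A))
    (hψQ : ∀ g : G, ψQ (g : G ⧸ A) = ((ψ g : G) : G ⧸ A))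
    (hcoin : ∀ x q : G ⧸ A, ψQ q * x * (φQ q)⁻¹ = x → q = 1) :
    Nat.card (Quot (RRel φ ψ)) =
      Nat.card (Quot (RRel φQ ψQ)) * Nat.card (Quot (RRel φA ψA)) := by
  classical
  -- the projection between class sets
  have wdp : ∀ x y : G, RRel φ ψ x y →
      RRel φQ ψQ ((x : G ⧸ A)) ((y : G ⧸ A)) := by
    rintro x y ⟨g, rfl⟩
    exact ⟨(g : G ⧸ A), by
      rw [hφQ, hψQ, ← QuotientGroup.mk_inv, ← QuotientGroup.mk_mul, ← QuotientGroup.mk_mul]⟩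
  let p : Quot (RRel φ ψ) → Quot (RRel φQ ψQ) :=
    Quot.map (fun x : G => (x : G ⧸ A)) wdp
  -- choose representatives
  have hrep : ∀ u : Quot (RRel φQ ψQ), ∃ x : G,
      Quot.mk (RRel φQ ψQ) ((x : G ⧸ A)) = u := by
    intro u
    obtain ⟨q, rfl⟩ := Quot.exists_rep u
    obtain ⟨x, rfl⟩ := QuotientGroup.mk_surjective q
    exact ⟨x, rfl⟩
  choose X hX using hrep
  -- membership facts
  have hψmem : ∀ t : ↥A, ψ (t : G) ∈ A := fun t => by rw [← hψA]; exact (ψA t).2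
  have hφmem : ∀ t : ↥A, φ (t : G) ∈ A := fun t => by rw [← hφA]; exact (φA t).2
  -- the fiber maps are well-defined
  have key : ∀ (x : G) (a b : ↥A), RRel φA ψA a b → RRel φ ψ (x * a) (x * b) := by
    rintro x a b ⟨t, rfl⟩
    refine ⟨(t : G), ?_⟩
    have hb : ((ψA t * a * (φA t)⁻¹ : ↥A) : G) = ψ (t : G) * a * (φ (t : G))⁻¹ := by
      push_cast [hφA, hψA]
      rfl
    calc x * ((ψA t * a * (φA t)⁻¹ : ↥A) : G)
        = x * (ψ (t : G) * (a : G) * (φ (t : G))⁻¹) := by rw [hb]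
      _ = (x * ψ (t : G)) * ((a : G) * (φ (t : G))⁻¹) := by group
      _ = (ψ (t : G) * x) * ((a : G) * (φ (t : G))⁻¹) := by
          rw [← hcen _ (hψmem t) x]
      _ = ψ (t : G) * (x * (a : G)) * (φ (t : G))⁻¹ := by group
  let F : Quot (RRel φQ ψQ) × Quot (RRel φA ψA) → Quot (RRel φ ψ) :=
    fun z => Quot.lift (fun a : ↥A => Quot.mk (RRel φ ψ) (X z.1 * a))
      (fun a b h => Quot.sound (key (X z.1) a b h)) z.2
  -- p ∘ fiber-map computation
  have hpF : ∀ (u : Quot (RRel φQ ψQ)) (a : ↥A),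
      p (Quot.mk (RRel φ ψ) (X u * a)) = u := by
    intro u a
    have h1 : ((X u * (a : G) : G) : G ⧸ A) = ((X u : G) : G ⧸ A) := by
      rw [QuotientGroup.mk_mul, (QuotientGroup.eq_one_iff (a : G)).2 a.2, mul_one]
    show Quot.mk (RRel φQ ψQ) ((X u * (a : G) : G) : G ⧸ A) = u
    rw [h1, hX u]
  have hbij : Function.Bijective F := by
    constructor
    · rintro ⟨u, α⟩ ⟨w, β⟩ h
      obtain ⟨a, rfl⟩ := Quot.exists_rep α
      obtain ⟨b, rfl⟩ := Quot.exists_rep β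
      have huw : u = w := by
        have h1 : p (Quot.mk (RRel φ ψ) (X u * a)) = p (Quot.mk (RRel φ ψ) (X w * b)) :=
          congrArg p h
        rwa [hpF u a, hpF w b] at h1
      subst huw
      have h2 : RRel φ ψ (X u * a) (X u * b) := by
        rw [← rrel_quot_eq φ ψ]
        exact h
      obtain ⟨g, hg⟩ := h2
      -- show g ∈ A using the coincidence hypothesis
      have hcq : ψQ ((g : G ⧸ A)) * ((X u : G) : G ⧸ A) * (φQ ((g : G ⧸ A)))⁻¹
          = ((X u : G) : G ⧸ A) := by
        have h3 := congrArg (fun z : G => ((z : G ⧸ A))) hg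
        simp only [QuotientGroup.mk_mul, QuotientGroup.mk_inv,
          (QuotientGroup.eq_one_iff ((a : G))).2 a.2,
          (QuotientGroup.eq_one_iff ((b : G))).2 b.2, mul_one] at h3
        rw [hφQ, hψQ, ← QuotientGroup.mk_inv]
        exact h3.symm
      have hgA : g ∈ A := (QuotientGroup.eq_one_iff g).1 (hcoin _ _ hcq)
      -- conclude the classes in A agree
      have hrel : RRel φA ψA a b := by
        refine ⟨⟨g, hgA⟩, ?_⟩
        have hψgA : ψ g ∈ A := by simpa using hψmem ⟨g, hgA⟩
        have h4 : (X u : G) * b = (X u : G) * (ψ g * a * (φ g)⁻¹) := by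
          rw [hg]
          calc ψ g * (X u * (a : G)) * (φ g)⁻¹
              = (ψ g * X u) * ((a : G) * (φ g)⁻¹) := by group
            _ = (X u * ψ g) * ((a : G) * (φ g)⁻¹) := by rw [hcen _ hψgA (X u)]
            _ = X u * (ψ g * (a : G) * (φ g)⁻¹) := by group
        have h5 : (b : G) = ψ g * a * (φ g)⁻¹ := by
          exact mul_left_cancel h4
        apply Subtype.ext
        push_cast [hφA, hψA]
        exact h5
      exact Prod.ext rfl (Quot.sound hrel)
    · intro y
      obtain ⟨z, rfl⟩ := Quot.exists_rep y
      set u := Quot.mk (RRel φQ ψQ) ((z : G ⧸ A)) with hu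
      have h1 : RRel φQ ψQ ((X u : G) : G ⧸ A) ((z : G ⧸ A)) := by
        rw [← rrel_quot_eq φQ ψQ, hX u]
      obtain ⟨q, hq⟩ := h1
      obtain ⟨g, rfl⟩ := QuotientGroup.mk_surjective q
      rw [hφQ, hψQ, ← QuotientGroup.mk_inv, ← QuotientGroup.mk_mul, ← QuotientGroup.mk_mul] at hq
      have h2 : (ψ g * X u * (φ g)⁻¹)⁻¹ * z ∈ A := (QuotientGroup.eq).1 hq.symm
      refine ⟨(u, Quot.mk _ ⟨_, h2⟩), ?_⟩
      show Quot.mk (RRel φ ψ) (X u * ((ψ g * X u * (φ g)⁻¹)⁻¹ * z)) = Quot.mk (RRel φ ψ) z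
      apply Quot.sound
      refine ⟨g, ?_⟩
      set w := ψ g * X u * (φ g)⁻¹ with hw
      set a := w⁻¹ * z with ha
      have haA : a ∈ A := h2
      have hz : z = w * a := by rw [ha, ← mul_assoc, mul_inv_cancel, one_mul]
      rw [hz, hw]
      calc ψ g * X u * (φ g)⁻¹ * a = ψ g * X u * ((φ g)⁻¹ * a) := by group
        _ = ψ g * X u * (a * (φ g)⁻¹) := by rw [hcen a haA ((φ g)⁻¹)]
        _ = ψ g * (X u * a) * (φ g)⁻¹ := by group
  rw [Nat.card_congr (Equiv.ofBijective F hbij).symm, Nat.card_prod]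


/-- If all factor coincidence groups are trivial, then twisted coincidences push down
the adapted series. -/
theorem coin_lemma (φ ψ : G →* G) (c : ℕ)
    (N : ℕ → Subgroup G) [hnorm : ∀ k, (N k).Normal]
    (hN1 : N 1 = ⊤)
    (hdesc : ∀ k, N (k + 1) ≤ N k)
    (hφinv : ∀ k, ∀ g ∈ N k, φ g ∈ N k) (hψinv : ∀ k, ∀ g ∈ N k, ψ g ∈ N k)
    (hcentral : ∀ k, ⁅(⊤ : Subgroup G), N k⁆ ≤ N (k + 1))
    (φ' ψ' : (k : ℕ) →
      (↥(N k) ⧸ (N (k + 1)).subgroupOf (N k)) →* (↥(N k) ⧸ (N (k + 1)).subgroupOf (N k)))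
    (hφ' : ∀ k (x : ↥(N k)),
      φ' k (QuotientGroup.mk x) =
        QuotientGroup.mk (⟨φ (x : G), hφinv k (x : G) x.2⟩ : ↥(N k)))
    (hψ' : ∀ k (x : ↥(N k)),
      ψ' k (QuotientGroup.mk x) =
        QuotientGroup.mk (⟨ψ (x : G), hψinv k (x : G) x.2⟩ : ↥(N k)))
    (hINJ : ∀ k, 1 ≤ k → k ≤ c →
      ∀ u : ↥(N k) ⧸ (N (k + 1)).subgroupOf (N k), ψ' k u = φ' k u → u = 1) :
    ∀ j, j ≤ c → ∀ x g : G, ψ g * x * (φ g)⁻¹ * x⁻¹ ∈ N j → g ∈ N j := by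
  intro j
  induction j with
  | zero =>
    intro _ x g _
    exact hdesc 0 (by rw [hN1]; trivial)
  | succ j ihj =>
    intro hjc x g hw
    rcases Nat.eq_zero_or_pos j with hj0 | hj1
    · subst hj0
      rw [hN1]; trivial
    · have hgj : g ∈ N j := ihj (le_of_lt hjc) x g (hdesc j hw)
      have hφg : φ g ∈ N j := hφinv j g hgj
      have hψg : ψ g ∈ N j := hψinv j g hgj
      have hcom : ⁅x, φ g⁆ ∈ N (j + 1) :=
        hcentral j (Subgroup.commutator_mem_commutator (Subgroup.mem_top x) hφg)
      have hkey : ψ g * (φ g)⁻¹ ∈ N (j + 1) := by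
        have heq : ψ g * (φ g)⁻¹ = (ψ g * x * (φ g)⁻¹ * x⁻¹) * ⁅x, φ g⁆ := by
          simp only [commutatorElement_def]
          group
        rw [heq]
        exact mul_mem hw hcom
      -- move to the factor group
      have hmem2 : ((⟨φ g, hφg⟩ : ↥(N j)))⁻¹ * (⟨ψ g, hψg⟩ : ↥(N j))
          ∈ (N (j + 1)).subgroupOf (N j) := by
        rw [Subgroup.mem_subgroupOf]
        show (φ g)⁻¹ * ψ g ∈ N (j + 1)
        have h5 : (φ g)⁻¹ * (ψ g * (φ g)⁻¹) * ((φ g)⁻¹)⁻¹ ∈ N (j + 1) :=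
          (hnorm (j + 1)).conj_mem _ hkey _
        have h6 : (φ g)⁻¹ * (ψ g * (φ g)⁻¹) * ((φ g)⁻¹)⁻¹ = (φ g)⁻¹ * ψ g := by group
        rwa [h6] at h5
      have hfac : ψ' j (QuotientGroup.mk (⟨g, hgj⟩ : ↥(N j)))
          = φ' j (QuotientGroup.mk (⟨g, hgj⟩ : ↥(N j))) := by
        rw [hφ' j, hψ' j]
        exact ((QuotientGroup.eq).2 hmem2).symm
      have := hINJ j hj1 (Nat.le_of_succ_le hjc) _ hfac
      rw [QuotientGroup.eq_one_iff, Subgroup.mem_subgroupOf] at this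
      exact this


/-- The endomorphism induced on a factor `K ⧸ (L ⊓ K)` by an endomorphism
preserving `K` and `L`. -/
noncomputable def inducedFactorEndo (φ : G →* G) (K L : Subgroup G) [L.Normal]
    (hK : ∀ g ∈ K, φ g ∈ K) (hL : ∀ g ∈ L, φ g ∈ L) :
    (↥K ⧸ L.subgroupOf K) →* (↥K ⧸ L.subgroupOf K) :=
  QuotientGroup.lift _
    ((QuotientGroup.mk' (L.subgroupOf K)).comp
      ((φ.domRestrict K).codRestrict K (fun x => hK x.1 x.2)))
    (by
      intro x hx
      rw [Subgroup.mem_subgroupOf] at hx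
      simp only [MonoidHom.mem_ker, MonoidHom.coe_comp, Function.comp_apply,
        QuotientGroup.mk'_apply, QuotientGroup.eq_one_iff, Subgroup.mem_subgroupOf]
      exact hL _ hx)

theorem inducedFactorEndo_mk (φ : G →* G) (K L : Subgroup G) [L.Normal]
    (hK : ∀ g ∈ K, φ g ∈ K) (hL : ∀ g ∈ L, φ g ∈ L) (x : ↥K) :
    inducedFactorEndo φ K L hK hL (QuotientGroup.mk x)
      = QuotientGroup.mk (⟨φ (x : G), hK (x : G) x.2⟩ : ↥K) := rfl


universe u

theorem aux : ∀ (m : ℕ) {G : Type u} [inst : Group G] (φ ψ : G →* G)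
    (N : ℕ → Subgroup G) [hnorm : ∀ k, (N k).Normal]
    (hN1 : N 1 = ⊤) (hNtop : N (m + 2) = ⊥)
    (hdesc : ∀ k, N (k + 1) ≤ N k)
    (hφinv : ∀ k, ∀ g ∈ N k, φ g ∈ N k) (hψinv : ∀ k, ∀ g ∈ N k, ψ g ∈ N k)
    (hcentral : ∀ k, ⁅(⊤ : Subgroup G), N k⁆ ≤ N (k + 1))
    (hfactors : ∀ k, 1 ≤ k → k ≤ m + 1 → ∃ d : ℕ,
      Nonempty ((↥(N k) ⧸ (N (k + 1)).subgroupOf (N k)) ≃* Multiplicative (Fin d → ℤ)))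
    (φ' ψ' : (k : ℕ) →
      (↥(N k) ⧸ (N (k + 1)).subgroupOf (N k)) →* (↥(N k) ⧸ (N (k + 1)).subgroupOf (N k)))
    (hφ' : ∀ k (x : ↥(N k)),
      φ' k (QuotientGroup.mk x) =
        QuotientGroup.mk (⟨φ (x : G), hφinv k (x : G) x.2⟩ : ↥(N k)))
    (hψ' : ∀ k (x : ↥(N k)),
      ψ' k (QuotientGroup.mk x) =
        QuotientGroup.mk (⟨ψ (x : G), hψinv k (x : G) x.2⟩ : ↥(N k)))
    (hfink : ∀ k, 1 ≤ k → k ≤ m + 1 → Finite (Quot (RRel (φ' k) (ψ' k)))),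
    Nat.card (Quot (RRel φ ψ)) =
      ∏ k ∈ Finset.Icc 1 (m + 1), Nat.card (Quot (RRel (φ' k) (ψ' k))) := by
  intro m
  induction m with
  | zero =>
    intro G instG φ ψ N hnorm hN1 hNtop hdesc hφinv hψinv hcentral hfactors φ' ψ' hφ' hψ' hfink
    have hmem1 : ∀ g : G, g ∈ N 1 := fun g => by rw [hN1]; trivial
    let ι : G →* ↥(N 1) := (MonoidHom.id G).codRestrict (N 1) (fun g => hmem1 g)
    let E0 : G →* ↥(N 1) ⧸ (N 2).subgroupOf (N 1) := (QuotientGroup.mk' _).comp ι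
    have hE0 : ∀ g : G, E0 g = QuotientGroup.mk (⟨g, hmem1 g⟩ : ↥(N 1)) := fun g => rfl
    have hbij : Function.Bijective E0 := by
      constructor
      · rw [injective_iff_map_eq_one]
        intro g hg
        rw [hE0, QuotientGroup.eq_one_iff, Subgroup.mem_subgroupOf] at hg
        have h2 : g ∈ (⊥ : Subgroup G) := by rw [← hNtop]; exact hg
        simpa using h2
      · intro q
        obtain ⟨x, rfl⟩ := QuotientGroup.mk_surjective q
        exact ⟨x.1, by rw [hE0]⟩
    let E := MulEquiv.ofBijective E0 hbij
    have hEφ : ∀ g, φ' 1 (E g) = E (φ g) := by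
      intro g
      show φ' 1 (E0 g) = E0 (φ g)
      rw [hE0, hE0, hφ' 1]
    have hEψ : ∀ g, ψ' 1 (E g) = E (ψ g) := by
      intro g
      show ψ' 1 (E0 g) = E0 (ψ g)
      rw [hE0, hE0, hψ' 1]
    rw [Finset.Icc_self, Finset.prod_singleton]
    exact Nat.card_congr (rsetEquiv E φ ψ (φ' 1) (ψ' 1) hEφ hEψ)
  | succ m ih =>
    intro G instG φ ψ N hnorm hN1 hNtop hdesc hφinv hψinv hcentral hfactors φ' ψ' hφ' hψ' hfink
    have hNle : ∀ i j, i ≤ j → N j ≤ N i := by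
      intro i j hij
      induction hij with
      | refl => exact le_rfl
      | step h ih2 => exact le_trans (hdesc _) ih2
    have hINJ : ∀ k, 1 ≤ k → k ≤ m + 2 → ∀ u, ψ' k u = φ' k u → u = 1 := by
      intro k h1 h2
      obtain ⟨d, ⟨e⟩⟩ := hfactors k h1 h2
      exact inj_of_finite (φ' k) (ψ' k) d e (hfink k h1 h2)
    -- the central subgroup at the bottom of the series
    have hcen : ∀ a ∈ N (m + 2), ∀ g : G, a * g = g * a := by
      intro a ha g
      have h1 : ⁅g, a⁆ ∈ N (m + 3) :=
        hcentral (m + 2) (Subgroup.commutator_mem_commutator (Subgroup.mem_top g) ha)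
      rw [hNtop] at h1
      have h2 : ⁅g, a⁆ = 1 := by simpa using h1
      exact (commutatorElement_eq_one_iff_mul_comm.1 h2).symm
    -- quotient data
    let π : G →* G ⧸ N (m + 2) := QuotientGroup.mk' (N (m + 2))
    have hπsur : Function.Surjective π := QuotientGroup.mk'_surjective (N (m + 2))
    have hφle : N (m + 2) ≤ (N (m + 2)).comap φ := fun g hg => hφinv (m + 2) g hg
    have hψle : N (m + 2) ≤ (N (m + 2)).comap ψ := fun g hg => hψinv (m + 2) g hg
    let φQ : G ⧸ N (m + 2) →* G ⧸ N (m + 2) := QuotientGroup.map _ _ φ hφle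
    let ψQ : G ⧸ N (m + 2) →* G ⧸ N (m + 2) := QuotientGroup.map _ _ ψ hψle
    have hφQ : ∀ g : G, φQ ((g : G ⧸ N (m + 2))) = ((φ g : G) : G ⧸ N (m + 2)) :=
      fun g => rfl
    have hψQ : ∀ g : G, ψQ ((g : G ⧸ N (m + 2))) = ((ψ g : G) : G ⧸ N (m + 2)) :=
      fun g => rfl
    let N' : ℕ → Subgroup (G ⧸ N (m + 2)) := fun k => (N k).map π
    haveI hnorm' : ∀ k, (N' k).Normal := fun k => Subgroup.Normal.map (hnorm k) π hπsur
    have hN1' : N' 1 = ⊤ := by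
      rw [eq_top_iff]
      rintro q -
      obtain ⟨x, rfl⟩ := hπsur q
      exact Subgroup.mem_map.2 ⟨x, (by rw [hN1]; trivial : x ∈ N 1), rfl⟩
    have hNtop' : N' (m + 2) = ⊥ := by
      rw [eq_bot_iff]
      rintro q hq
      obtain ⟨x, hx, rfl⟩ := Subgroup.mem_map.1 hq
      have h1 : π x = 1 := (QuotientGroup.eq_one_iff x).2 hx
      simp [h1]
    have hdesc' : ∀ k, N' (k + 1) ≤ N' k := fun k => Subgroup.map_mono (hdesc k)
    have hφinv' : ∀ k, ∀ q ∈ N' k, φQ q ∈ N' k := by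
      intro k q hq
      obtain ⟨x, hx, rfl⟩ := Subgroup.mem_map.1 hq
      exact Subgroup.mem_map.2 ⟨φ x, hφinv k x hx, (hφQ x).symm⟩
    have hψinv' : ∀ k, ∀ q ∈ N' k, ψQ q ∈ N' k := by
      intro k q hq
      obtain ⟨x, hx, rfl⟩ := Subgroup.mem_map.1 hq
      exact Subgroup.mem_map.2 ⟨ψ x, hψinv k x hx, (hψQ x).symm⟩
    have hcentral' : ∀ k, ⁅(⊤ : Subgroup (G ⧸ N (m + 2))), N' k⁆ ≤ N' (k + 1) := by
      intro k
      rw [Subgroup.commutator_le]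
      intro q hq r hr
      obtain ⟨x, rfl⟩ := hπsur q
      obtain ⟨y, hy, rfl⟩ := Subgroup.mem_map.1 hr
      have h1 : ⁅π x, π y⁆ = π ⁅x, y⁆ := (map_commutatorElement π x y).symm
      rw [h1]
      exact Subgroup.mem_map.2 ⟨⁅x, y⁆,
        hcentral k (Subgroup.commutator_mem_commutator (Subgroup.mem_top x) hy), rfl⟩
    -- comparison of factors
    let ρ : (k : ℕ) → ↥(N k) →* (↥(N' k) ⧸ (N' (k + 1)).subgroupOf (N' k)) := fun k =>
      (QuotientGroup.mk' _).comp (π.subgroupMap (N k))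
    have hρ : ∀ k (x : ↥(N k)), ρ k x =
        QuotientGroup.mk (⟨π x.1, Subgroup.mem_map.2 ⟨x.1, x.2, rfl⟩⟩ : ↥(N' k)) :=
      fun k x => rfl
    have hρker : ∀ k (x : ↥(N k)), x.1 ∈ N (k + 1) → ρ k x = 1 := by
      intro k x hx
      rw [hρ, QuotientGroup.eq_one_iff, Subgroup.mem_subgroupOf]
      exact Subgroup.mem_map.2 ⟨x.1, hx, rfl⟩
    let eBar : (k : ℕ) → (↥(N k) ⧸ (N (k + 1)).subgroupOf (N k)) →*
        (↥(N' k) ⧸ (N' (k + 1)).subgroupOf (N' k)) := fun k =>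
      QuotientGroup.lift _ (ρ k)
        (fun x hx => MonoidHom.mem_ker.2 (hρker k x (Subgroup.mem_subgroupOf.1 hx)))
    have heBar : ∀ k (x : ↥(N k)), eBar k (QuotientGroup.mk x) = ρ k x := fun k x => rfl
    have heBarsur : ∀ k, Function.Surjective (eBar k) := by
      intro k q
      obtain ⟨y, rfl⟩ := QuotientGroup.mk_surjective q
      obtain ⟨x, hx, hxy⟩ := Subgroup.mem_map.1 y.2
      refine ⟨QuotientGroup.mk (⟨x, hx⟩ : ↥(N k)), ?_⟩
      rw [heBar, hρ]
      exact congrArg QuotientGroup.mk (Subtype.ext hxy)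
    have heBarinj : ∀ k, k ≤ m + 1 → Function.Injective (eBar k) := by
      intro k hk
      rw [injective_iff_map_eq_one]
      intro u hu
      obtain ⟨x, rfl⟩ := QuotientGroup.mk_surjective u
      rw [heBar, hρ, QuotientGroup.eq_one_iff, Subgroup.mem_subgroupOf] at hu
      obtain ⟨z, hz, hzx⟩ := Subgroup.mem_map.1 hu
      have h1 : z⁻¹ * x.1 ∈ N (m + 2) := (QuotientGroup.eq).1 hzx
      have h2 : z⁻¹ * x.1 ∈ N (k + 1) := hNle (k + 1) (m + 2) (by omega) h1
      have h3 : x.1 ∈ N (k + 1) := by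
        have h4 := mul_mem hz h2
        rwa [mul_inv_cancel_left] at h4
      rw [QuotientGroup.eq_one_iff, Subgroup.mem_subgroupOf]
      exact h3
    -- induced endomorphisms on the factors of the quotient series
    let φ'' : (k : ℕ) → (↥(N' k) ⧸ (N' (k + 1)).subgroupOf (N' k)) →*
        (↥(N' k) ⧸ (N' (k + 1)).subgroupOf (N' k)) := fun k =>
      inducedFactorEndo φQ (N' k) (N' (k + 1)) (hφinv' k) (hφinv' (k + 1))
    let ψ'' : (k : ℕ) → (↥(N' k) ⧸ (N' (k + 1)).subgroupOf (N' k)) →*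
        (↥(N' k) ⧸ (N' (k + 1)).subgroupOf (N' k)) := fun k =>
      inducedFactorEndo ψQ (N' k) (N' (k + 1)) (hψinv' k) (hψinv' (k + 1))
    have hφ'' : ∀ k (x : ↥(N' k)), φ'' k (QuotientGroup.mk x) =
        QuotientGroup.mk (⟨φQ (x : G ⧸ N (m + 2)), hφinv' k (x : G ⧸ N (m + 2)) x.2⟩ : ↥(N' k)) :=
      fun k x => inducedFactorEndo_mk φQ (N' k) (N' (k + 1)) (hφinv' k) (hφinv' (k + 1)) x
    have hψ'' : ∀ k (x : ↥(N' k)), ψ'' k (QuotientGroup.mk x) =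
        QuotientGroup.mk (⟨ψQ (x : G ⧸ N (m + 2)), hψinv' k (x : G ⧸ N (m + 2)) x.2⟩ : ↥(N' k)) :=
      fun k x => inducedFactorEndo_mk ψQ (N' k) (N' (k + 1)) (hψinv' k) (hψinv' (k + 1)) x
    -- equivariance of the comparison maps
    have hEφ : ∀ k (u : ↥(N k) ⧸ (N (k + 1)).subgroupOf (N k)),
        φ'' k (eBar k u) = eBar k (φ' k u) := by
      intro k u
      obtain ⟨x, rfl⟩ := QuotientGroup.mk_surjective u
      rw [heBar, hρ, hφ'' k, hφ' k, heBar, hρ]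
      exact congrArg QuotientGroup.mk (Subtype.ext (hφQ x.1))
    have hEψ : ∀ k (u : ↥(N k) ⧸ (N (k + 1)).subgroupOf (N k)),
        ψ'' k (eBar k u) = eBar k (ψ' k u) := by
      intro k u
      obtain ⟨x, rfl⟩ := QuotientGroup.mk_surjective u
      rw [heBar, hρ, hψ'' k, hψ' k, heBar, hρ]
      exact congrArg QuotientGroup.mk (Subtype.ext (hψQ x.1))
    -- data for the inductive hypothesis
    have hfactors'' : ∀ k, 1 ≤ k → k ≤ m + 1 → ∃ d : ℕ,
        Nonempty ((↥(N' k) ⧸ (N' (k + 1)).subgroupOf (N' k)) ≃* Multiplicative (Fin d → ℤ)) := by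
      intro k h1 h2
      obtain ⟨d, ⟨f⟩⟩ := hfactors k h1 (by omega)
      exact ⟨d, ⟨(MulEquiv.ofBijective (eBar k) ⟨heBarinj k h2, heBarsur k⟩).symm.trans f⟩⟩
    have hfink'' : ∀ k, 1 ≤ k → k ≤ m + 1 → Finite (Quot (RRel (φ'' k) (ψ'' k))) := by
      intro k h1 h2
      haveI := hfink k h1 (by omega)
      exact Finite.of_equiv _ (rsetEquiv (MulEquiv.ofBijective (eBar k) ⟨heBarinj k h2, heBarsur k⟩)
        (φ' k) (ψ' k) (φ'' k) (ψ'' k) (fun x => hEφ k x) (fun x => hEψ k x))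
    have hQcard := ih φQ ψQ N' hN1' hNtop' hdesc' hφinv' hψinv' hcentral' hfactors''
      φ'' ψ'' hφ'' hψ'' hfink''
    -- restrictions to the central subgroup
    let φA : ↥(N (m + 2)) →* ↥(N (m + 2)) :=
      (φ.domRestrict (N (m + 2))).codRestrict (N (m + 2)) (fun x => hφinv (m + 2) x.1 x.2)
    let ψA : ↥(N (m + 2)) →* ↥(N (m + 2)) :=
      (ψ.domRestrict (N (m + 2))).codRestrict (N (m + 2)) (fun x => hψinv (m + 2) x.1 x.2)
    have hφA : ∀ a : ↥(N (m + 2)), (φA a : G) = φ (a : G) := fun a => rfl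
    have hψA : ∀ a : ↥(N (m + 2)), (ψA a : G) = ψ (a : G) := fun a => rfl
    -- coincidence triviality on the quotient
    have hcoin : ∀ x q : G ⧸ N (m + 2), ψQ q * x * (φQ q)⁻¹ = x → q = 1 := by
      intro x q h
      obtain ⟨x₀, rfl⟩ := hπsur x
      obtain ⟨g, rfl⟩ := hπsur q
      have h1 : ((ψ g * x₀ * (φ g)⁻¹ : G) : G ⧸ N (m + 2)) = ((x₀ : G) : G ⧸ N (m + 2)) := by
        rw [QuotientGroup.mk_mul, QuotientGroup.mk_mul, QuotientGroup.mk_inv, ← hφQ, ← hψQ]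
        exact h
      have h2 : (ψ g * x₀ * (φ g)⁻¹)⁻¹ * x₀ ∈ N (m + 2) := (QuotientGroup.eq).1 h1
      have h3 : ψ g * x₀ * (φ g)⁻¹ * x₀⁻¹ ∈ N (m + 2) := by
        have h4 : x₀⁻¹ * (ψ g * x₀ * (φ g)⁻¹) ∈ N (m + 2) := by
          have h5 := (N (m + 2)).inv_mem h2
          rwa [mul_inv_rev, inv_inv] at h5
        have h6 := (hnorm (m + 2)).conj_mem _ h4 x₀
        have h7 : x₀ * (x₀⁻¹ * (ψ g * x₀ * (φ g)⁻¹)) * x₀⁻¹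
            = ψ g * x₀ * (φ g)⁻¹ * x₀⁻¹ := by group
        rwa [h7] at h6
      have hg : g ∈ N (m + 2) := coin_lemma φ ψ (m + 2) N hN1 hdesc hφinv hψinv hcentral
        φ' ψ' hφ' hψ' hINJ (m + 2) le_rfl x₀ g h3
      exact (QuotientGroup.eq_one_iff g).2 hg
    have hstep := central_step φ ψ (N (m + 2)) hcen φA ψA hφA hψA φQ ψQ hφQ hψQ hcoin
    -- identify the bottom factor with the central subgroup
    have hAiso : Nat.card (Quot (RRel φA ψA))
        = Nat.card (Quot (RRel (φ' (m + 2)) (ψ' (m + 2)))) := by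
      let μ : ↥(N (m + 2)) →* ↥(N (m + 2)) ⧸ (N (m + 3)).subgroupOf (N (m + 2)) :=
        QuotientGroup.mk' _
      have hμbij : Function.Bijective μ := by
        constructor
        · rw [injective_iff_map_eq_one]
          intro a ha
          rw [QuotientGroup.mk'_apply, QuotientGroup.eq_one_iff, Subgroup.mem_subgroupOf,
            hNtop] at ha
          exact Subtype.ext (by simpa using ha)
        · exact QuotientGroup.mk'_surjective _
      let Eμ := MulEquiv.ofBijective μ hμbij
      have hμφ : ∀ a, φ' (m + 2) (Eμ a) = Eμ (φA a) := by
        intro a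
        show φ' (m + 2) (QuotientGroup.mk a) = QuotientGroup.mk (φA a)
        rw [hφ' (m + 2) a]
        exact congrArg QuotientGroup.mk (Subtype.ext rfl)
      have hμψ : ∀ a, ψ' (m + 2) (Eμ a) = Eμ (ψA a) := by
        intro a
        show ψ' (m + 2) (QuotientGroup.mk a) = QuotientGroup.mk (ψA a)
        rw [hψ' (m + 2) a]
        exact congrArg QuotientGroup.mk (Subtype.ext rfl)
      exact Nat.card_congr (rsetEquiv Eμ φA ψA (φ' (m + 2)) (ψ' (m + 2)) hμφ hμψ)
    -- assemble everything
    rw [Finset.prod_Icc_succ_top (by omega : 1 ≤ m + 2), hstep, hQcard, hAiso]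
    congr 1
    refine Finset.prod_congr rfl ?_
    intro k hk
    rw [Finset.mem_Icc] at hk
    exact (Nat.card_congr (rsetEquiv (MulEquiv.ofBijective (eBar k) ⟨heBarinj k hk.2, heBarsur k⟩)
      (φ' k) (ψ' k) (φ'' k) (ψ'' k) (fun x => hEφ k x) (fun x => hEψ k x))).symm

end ReidProd

/-- Product formula: let `G` be a finitely generated torsion-free nilpotent group
with endomorphisms `φ, ψ`, and let `G = N 1 ≥ N 2 ≥ … ≥ N c ≥ N (c+1) = 1` be the
adapted lower central series: each `N k` is normal and `φ`- and `ψ`-invariant,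
`[G, N k] ≤ N (k+1)`, and each factor `N k / N (k+1)` is finitely generated
torsion-free abelian (≅ `ℤ^{d_k}`). Let `φₖ, ψₖ` be the endomorphisms induced on
the factors. If `R(φ,ψ) < ∞` and every `R(φₖ,ψₖ) < ∞`, then
`R(φ,ψ) = ∏_{k=1}^{c} R(φₖ,ψₖ)`. -/
theorem reidemeister_coincidence_product_formula
    {G : Type*} [Group G]
    (hFG : Group.FG G) (htf : ∀ g : G, g ≠ 1 → ¬IsOfFinOrder g) (hnilp : Group.IsNilpotent G)
    (φ ψ : G →* G) (c : ℕ) (hc : 1 ≤ c)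
    (N : ℕ → Subgroup G) [hnorm : ∀ k, (N k).Normal]
    (hN1 : N 1 = ⊤) (hNtop : N (c + 1) = ⊥)
    (hdesc : ∀ k, N (k + 1) ≤ N k)
    (hφinv : ∀ k, ∀ g ∈ N k, φ g ∈ N k) (hψinv : ∀ k, ∀ g ∈ N k, ψ g ∈ N k)
    (hcentral : ∀ k, ⁅(⊤ : Subgroup G), N k⁆ ≤ N (k + 1))
    (hfactors : ∀ k, 1 ≤ k → k ≤ c → ∃ d : ℕ,
      Nonempty ((↥(N k) ⧸ (N (k + 1)).subgroupOf (N k)) ≃*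
        Multiplicative (Fin d → ℤ)))
    (φ' ψ' : (k : ℕ) →
      (↥(N k) ⧸ (N (k + 1)).subgroupOf (N k)) →* (↥(N k) ⧸ (N (k + 1)).subgroupOf (N k)))
    (hφ' : ∀ k (x : ↥(N k)),
      φ' k (QuotientGroup.mk x) =
        QuotientGroup.mk (⟨φ (x : G), hφinv k (x : G) x.2⟩ : ↥(N k)))
    (hψ' : ∀ k (x : ↥(N k)),
      ψ' k (QuotientGroup.mk x) =
        QuotientGroup.mk (⟨ψ (x : G), hψinv k (x : G) x.2⟩ : ↥(N k)))
    (hfin : Finite (Quot (fun x y : G => ∃ g : G, y = ψ g * x * (φ g)⁻¹)))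
    (hfink : ∀ k, 1 ≤ k → k ≤ c →
      Finite (Quot (fun x y : ↥(N k) ⧸ (N (k + 1)).subgroupOf (N k) =>
        ∃ g, y = ψ' k g * x * (φ' k g)⁻¹))) :
    Nat.card (Quot (fun x y : G => ∃ g : G, y = ψ g * x * (φ g)⁻¹)) =
      ∏ k ∈ Finset.Icc 1 c,
        Nat.card (Quot (fun x y : ↥(N k) ⧸ (N (k + 1)).subgroupOf (N k) =>
          ∃ g, y = ψ' k g * x * (φ' k g)⁻¹)) := by
  obtain ⟨m, rfl⟩ : ∃ m, c = m + 1 := ⟨c - 1, by omega⟩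
  exact ReidProd.aux m φ ψ N hN1 hNtop hdesc hφinv hψinv hcentral hfactors φ' ψ' hφ' hψ' hfink
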